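/- Two commuting matrices in SL₂(ℂ) can be simultaneously approximated by commuting diagonalizable (semisimple) matrices via conjugation: there exists a sequence g_n ∈ SL₂(ℂ) such that g_n A g_n⁻¹ and g_n B g_n⁻¹ converge to a pair of commuting diagonalizable matrices in SL₂(ℂ). -/

import Mathlib

open Matrix Module

lemma exists_common_eigenvector (A B : Matrix (Fin 2) (Fin 2) ℂ)
    (hAB : A * B = B * A) :
    ∃ (v : Fin 2 → ℂ) (μ ν : ℂ), v ≠ 0 ∧ A.mulVec v = μ • v ∧ B.mulVec v = ν • v := by
  set f : Module.End ℂ (Fin 2 → ℂ) := A.mulVecLin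
  set g : Module.End ℂ (Fin 2 → ℂ) := B.mulVecLin
  have hfg : f * g = g * f := by
    show f ∘ₗ g = g ∘ₗ f
    simp only [f, g, ← Matrix.mulVecLin_mul, hAB]
  obtain ⟨μ, hμ⟩ := Module.End.exists_eigenvalue f
  set E := f.eigenspace μ with hE
  have hEinv : ∀ x ∈ E, g x ∈ E := by
    intro x hx
    rw [Module.End.mem_eigenspace_iff] at hx ⊢
    have := congrArg (fun h => h x) (congrArg DFunLike.coe hfg)
    simp only [Module.End.mul_apply] at this
    rw [this, hx, _root_.map_smul]
  set g' : Module.End ℂ E := g.restrict hEinv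
  have : Nontrivial E := Submodule.nontrivial_iff_ne_bot.mpr hμ
  obtain ⟨ν, hν⟩ := Module.End.exists_eigenvalue g'
  obtain ⟨w, hw⟩ := hν.exists_hasEigenvector
  refine ⟨(w : Fin 2 → ℂ), μ, ν, ?_, ?_, ?_⟩
  · simpa using hw.2
  · have : f w = μ • (w : Fin 2 → ℂ) := Module.End.mem_eigenspace_iff.mp w.2
    simpa [f] using this
  · have : g' w = ν • w := hw.apply_eq_smul
    have := congrArg Subtype.val this
    simpa [g', g, LinearMap.restrict_apply] using this

-- h with det 1 and first column v (after scaling freedom folded in)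
lemma exists_basis_matrix (v : Fin 2 → ℂ) (hv : v ≠ 0) :
    ∃ h : Matrix (Fin 2) (Fin 2) ℂ, h.det = 1 ∧ h.mulVec (Pi.single 0 1) = v := by
  by_cases h0 : v 0 = 0
  · have h1 : v 1 ≠ 0 := by
      intro h1; apply hv; funext i; fin_cases i <;> simp [h0, h1]
    refine ⟨!![v 0, -(v 1)⁻¹; v 1, 0], ?_, ?_⟩
    · simp [Matrix.det_fin_two, h0]
      field_simp
    · funext i; fin_cases i <;> simp [Matrix.mulVec_single, Matrix.mulVec, dotProduct, Fin.sum_univ_two]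
  · refine ⟨!![v 0, 0; v 1, (v 0)⁻¹], ?_, ?_⟩
    · simp [Matrix.det_fin_two]
      field_simp
    · funext i; fin_cases i <;> simp [Matrix.mulVec_single, Matrix.mulVec, dotProduct, Fin.sum_univ_two]

lemma conj_lower_zero (h A : Matrix (Fin 2) (Fin 2) ℂ) (v : Fin 2 → ℂ) (μ : ℂ)
    (hdet : h.det = 1) (hcol : h.mulVec (Pi.single 0 1) = v)
    (hAv : A.mulVec v = μ • v) :
    (h⁻¹ * A * h) (1 : Fin 2) (0 : Fin 2) = 0 := by
  have hinv : h⁻¹ * h = 1 := Matrix.nonsing_inv_mul h (by simp [hdet])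
  have key : (h⁻¹ * A * h).mulVec (Pi.single 0 1) = μ • (Pi.single 0 1 : Fin 2 → ℂ) := by
    have hv' : h⁻¹.mulVec v = Pi.single 0 1 := by
      rw [← hcol, Matrix.mulVec_mulVec, hinv, Matrix.one_mulVec]
    rw [← Matrix.mulVec_mulVec, ← Matrix.mulVec_mulVec, hcol, hAv,
      Matrix.mulVec_smul, hv']
  have := congrArg (fun w => w 1) key
  simpa [Matrix.mulVec_single] using this

theorem stmt9 (A B : Matrix.SpecialLinearGroup (Fin 2) ℂ)
    (hAB : A * B = B * A) :
    ∃ (g : ℕ → Matrix.SpecialLinearGroup (Fin 2) ℂ)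
      (Ainf Binf : Matrix.SpecialLinearGroup (Fin 2) ℂ),
      Ainf * Binf = Binf * Ainf ∧
      (∃ P : Matrix (Fin 2) (Fin 2) ℂ, IsUnit P.det ∧
        (P * (Ainf : Matrix (Fin 2) (Fin 2) ℂ) * P⁻¹).IsDiag) ∧
      (∃ Q : Matrix (Fin 2) (Fin 2) ℂ, IsUnit Q.det ∧
        (Q * (Binf : Matrix (Fin 2) (Fin 2) ℂ) * Q⁻¹).IsDiag) ∧
      Filter.Tendsto
        (fun k => ((g k : Matrix (Fin 2) (Fin 2) ℂ) * A * ((g k)⁻¹ : Matrix.SpecialLinearGroup (Fin 2) ℂ)))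
        Filter.atTop (nhds (Ainf : Matrix (Fin 2) (Fin 2) ℂ)) ∧
      Filter.Tendsto
        (fun k => ((g k : Matrix (Fin 2) (Fin 2) ℂ) * B * ((g k)⁻¹ : Matrix.SpecialLinearGroup (Fin 2) ℂ)))
        Filter.atTop (nhds (Binf : Matrix (Fin 2) (Fin 2) ℂ)) := by
  have hAB' : (A : Matrix (Fin 2) (Fin 2) ℂ) * B = (B : Matrix (Fin 2) (Fin 2) ℂ) * A := by
    have := congrArg (fun x : Matrix.SpecialLinearGroup (Fin 2) ℂ =>
      (x : Matrix (Fin 2) (Fin 2) ℂ)) hAB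
    simpa using this
  obtain ⟨v, μ, ν, hv, hAv, hBv⟩ := exists_common_eigenvector A B hAB'
  obtain ⟨h, hdet, hcol⟩ := exists_basis_matrix v hv
  set H : Matrix.SpecialLinearGroup (Fin 2) ℂ := ⟨h, hdet⟩ with hH
  have hHinv : ((H⁻¹ : Matrix.SpecialLinearGroup (Fin 2) ℂ) : Matrix (Fin 2) (Fin 2) ℂ) = h⁻¹ := by
    rw [Matrix.SpecialLinearGroup.coe_inv, Matrix.inv_def]
    simp [hdet]
    rfl
  set M' : Matrix.SpecialLinearGroup (Fin 2) ℂ := H⁻¹ * A * H with hM'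
  set N' : Matrix.SpecialLinearGroup (Fin 2) ℂ := H⁻¹ * B * H with hN'
  set Mc : Matrix (Fin 2) (Fin 2) ℂ := (M' : Matrix (Fin 2) (Fin 2) ℂ) with hMc
  set Nc : Matrix (Fin 2) (Fin 2) ℂ := (N' : Matrix (Fin 2) (Fin 2) ℂ) with hNc
  have hMceq : Mc = h⁻¹ * (A : Matrix (Fin 2) (Fin 2) ℂ) * h := by
    simp [hMc, hM', hHinv]
    rfl
  have hNceq : Nc = h⁻¹ * (B : Matrix (Fin 2) (Fin 2) ℂ) * h := by
    simp [hNc, hN', hHinv]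
    rfl
  have hM10 : Mc 1 0 = 0 := by rw [hMceq]; exact conj_lower_zero h _ v μ hdet hcol hAv
  have hN10 : Nc 1 0 = 0 := by rw [hNceq]; exact conj_lower_zero h _ v ν hdet hcol hBv
  have hMdet : Mc 0 0 * Mc 1 1 = 1 := by
    have := M'.2
    rw [Matrix.det_fin_two] at this
    rw [← this, ← hMc, hM10]; ring
  have hNdet : Nc 0 0 * Nc 1 1 = 1 := by
    have := N'.2
    rw [Matrix.det_fin_two] at this
    rw [← this, ← hNc, hN10]; ring
  -- the contracting sequence
  set c : ℕ → ℂ := fun k => ((k : ℂ) + 1)⁻¹ with hc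
  have hc0 : ∀ k, c k ≠ 0 := by
    intro k
    have : ((k : ℂ) + 1) ≠ 0 := by
      intro hk
      have h2 : (k + 1 : ℕ) = 0 := by exact_mod_cast hk
      simp at h2
    simp [hc, this]
  have hclim : Filter.Tendsto c Filter.atTop (nhds 0) := by
    have h1 : Filter.Tendsto (fun n : ℕ => 1 / ((n : ℝ) + 1)) Filter.atTop (nhds 0) :=
      tendsto_one_div_add_atTop_nhds_zero_nat
    have h2 := (Complex.continuous_ofReal.tendsto 0).comp h1
    have : c = fun n : ℕ => ((1 / ((n : ℝ) + 1) : ℝ) : ℂ) := by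
      funext n; push_cast [hc]; rw [one_div]
    rw [this]; simpa [Function.comp_def] using h2
  set D : ℕ → Matrix.SpecialLinearGroup (Fin 2) ℂ := fun k =>
    ⟨Matrix.diagonal ![c k, (c k)⁻¹], by
      simp [Matrix.det_diagonal, Fin.prod_univ_two, hc0 k]⟩ with hD
  have hDinv : ∀ k, ((D k)⁻¹ : Matrix.SpecialLinearGroup (Fin 2) ℂ)
      = ⟨Matrix.diagonal ![(c k)⁻¹, c k], by
          simp [Matrix.det_diagonal, Fin.prod_univ_two, hc0 k]⟩ := by
    intro k
    apply inv_eq_of_mul_eq_one_right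
    apply Subtype.ext
    simp only [Matrix.SpecialLinearGroup.coe_mul, Matrix.SpecialLinearGroup.coe_one]
    simp only [hD]
    ext i j
    show (Matrix.diagonal ![c k, (c k)⁻¹] * Matrix.diagonal ![(c k)⁻¹, c k]) i j = (1 : Matrix (Fin 2) (Fin 2) ℂ) i j
    rw [Matrix.diagonal_mul_diagonal]
    fin_cases i <;> fin_cases j <;>
      simp [Matrix.diagonal_apply, Matrix.one_apply, hc0 k]
  set g : ℕ → Matrix.SpecialLinearGroup (Fin 2) ℂ := fun k => D k * H⁻¹ with hg
  have key : ∀ (X : Matrix.SpecialLinearGroup (Fin 2) ℂ) (k : ℕ),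
      g k * X * (g k)⁻¹ = D k * (H⁻¹ * X * H) * (D k)⁻¹ := by
    intro X k
    simp only [hg]
    group
  set Ainf : Matrix.SpecialLinearGroup (Fin 2) ℂ :=
    ⟨Matrix.diagonal ![Mc 0 0, Mc 1 1], by
      simp [Matrix.det_diagonal, Fin.prod_univ_two, hMdet]⟩ with hAinf
  set Binf : Matrix.SpecialLinearGroup (Fin 2) ℂ :=
    ⟨Matrix.diagonal ![Nc 0 0, Nc 1 1], by
      simp [Matrix.det_diagonal, Fin.prod_univ_two, hNdet]⟩ with hBinf
  have hconj : ∀ (X : Matrix.SpecialLinearGroup (Fin 2) ℂ) (k : ℕ),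
      ((g k : Matrix (Fin 2) (Fin 2) ℂ) * X * ((g k)⁻¹ : Matrix.SpecialLinearGroup (Fin 2) ℂ))
        = Matrix.diagonal ![c k, (c k)⁻¹] * ((H⁻¹ * X * H : Matrix.SpecialLinearGroup (Fin 2) ℂ) : Matrix (Fin 2) (Fin 2) ℂ) * Matrix.diagonal ![(c k)⁻¹, c k] := by
    intro X k
    have h1 : ((g k : Matrix (Fin 2) (Fin 2) ℂ) * X * ((g k)⁻¹ : Matrix.SpecialLinearGroup (Fin 2) ℂ))
        = ((g k * X * (g k)⁻¹ : Matrix.SpecialLinearGroup (Fin 2) ℂ) : Matrix (Fin 2) (Fin 2) ℂ) := by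
      simp [Matrix.SpecialLinearGroup.coe_mul]
    rw [h1, key X k]
    simp only [Matrix.SpecialLinearGroup.coe_mul, hDinv k]
    simp only [hD]
    rfl
  have tendsto_conj : ∀ (X : Matrix.SpecialLinearGroup (Fin 2) ℂ),
      (H⁻¹ * X * H : Matrix.SpecialLinearGroup (Fin 2) ℂ).1 1 0 = 0 →
      Filter.Tendsto
        (fun k => ((g k : Matrix (Fin 2) (Fin 2) ℂ) * X * ((g k)⁻¹ : Matrix.SpecialLinearGroup (Fin 2) ℂ)))
        Filter.atTop
        (nhds (Matrix.diagonal ![(H⁻¹ * X * H : Matrix.SpecialLinearGroup (Fin 2) ℂ).1 0 0,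
          (H⁻¹ * X * H : Matrix.SpecialLinearGroup (Fin 2) ℂ).1 1 1])) := by
    intro X hX10
    set Y : Matrix (Fin 2) (Fin 2) ℂ := (H⁻¹ * X * H : Matrix.SpecialLinearGroup (Fin 2) ℂ).1 with hY
    refine tendsto_pi_nhds.mpr ?_
    intro i
    rw [tendsto_pi_nhds]
    intro j
    have entry : ∀ k, ((g k : Matrix (Fin 2) (Fin 2) ℂ) * X * ((g k)⁻¹ : Matrix.SpecialLinearGroup (Fin 2) ℂ)) i j
        = (![c k, (c k)⁻¹] i) * Y i j * (![(c k)⁻¹, c k] j) := by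
      intro k
      rw [hconj X k]
      rw [Matrix.mul_diagonal, Matrix.diagonal_mul]
    simp only [entry]
    fin_cases i <;> fin_cases j
    · have e : ∀ k : ℕ, c k * Y 0 0 * (c k)⁻¹ = Y 0 0 := fun k => by
        rw [mul_comm (c k) (Y 0 0), mul_assoc, mul_inv_cancel₀ (hc0 k), mul_one]
      exact tendsto_const_nhds.congr fun k => (e k).symm
    · have := (hclim.mul (tendsto_const_nhds (x := Y 0 1))).mul hclim
      simp only [zero_mul, mul_zero] at this
      simpa using this
    · have e : ∀ k : ℕ, (c k)⁻¹ * Y 1 0 * (c k)⁻¹ = 0 := fun k => by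
        rw [hX10]; ring
      exact tendsto_const_nhds.congr fun k => (e k).symm
    · have e : ∀ k : ℕ, (c k)⁻¹ * Y 1 1 * c k = Y 1 1 := fun k => by
        rw [mul_comm ((c k)⁻¹) (Y 1 1), mul_assoc, inv_mul_cancel₀ (hc0 k), mul_one]
      exact tendsto_const_nhds.congr fun k => (e k).symm
  refine ⟨g, Ainf, Binf, ?_, ⟨1, by simp, by simp [hAinf, Matrix.isDiag_diagonal]⟩,
    ⟨1, by simp, by simp [hBinf, Matrix.isDiag_diagonal]⟩, ?_, ?_⟩
  · apply Subtype.ext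
    simp only [Matrix.SpecialLinearGroup.coe_mul]
    simp only [hAinf, hBinf,
      Matrix.diagonal_mul_diagonal]
    congr 1
    funext i
    fin_cases i <;> simp [mul_comm]
  · exact tendsto_conj A hM10
  · exact tendsto_conj B hN10
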